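/- Let B and C be A-bounded linear operators on H (i.e., there exists λ > 0 with ‖Bx‖_A ≤ λ‖x‖_A and ‖Cx‖_A ≤ λ‖x‖_A for all x). Then for every α ∈ [0,1], both w_A(√α·B + √(1−α)·C) ≤ w_{A,e}(B,C) and w_A(√α·B − √(1−α)·C) ≤ w_{A,e}(B,C). -/

import Mathlib

noncomputable section

open scoped ComplexInnerProductSpace

variable {H : Type*} [NormedAddCommGroup H] [InnerProductSpace ℂ H] [CompleteSpace H]

/-- The semi-inner product induced by a positive operator `A`:
`⟨x,y⟩_A = ⟨Ax,y⟩` (linear in the first argument, following the paper's convention). -/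
def innerA (A : H →L[ℂ] H) (x y : H) : ℂ := ⟪y, A x⟫

/-- The seminorm induced by `A`: `‖x‖_A = ⟨Ax,x⟩^{1/2}`. -/
def normA (A : H →L[ℂ] H) (x : H) : ℝ := Real.sqrt (innerA A x x).re

/-- The `A`-numerical radius `w_A(T) = sup { |⟨Tx,x⟩_A| : ‖x‖_A = 1 }`. -/
def wA (A T : H →L[ℂ] H) : ℝ :=
  sSup {r : ℝ | ∃ x : H, normA A x = 1 ∧ r = ‖innerA A (T x) x‖}

/-- The `A`-Crawford number `c_A(T) = inf { |⟨Tx,x⟩_A| : ‖x‖_A = 1 }`. -/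
def cA (A T : H →L[ℂ] H) : ℝ :=
  sInf {r : ℝ | ∃ x : H, normA A x = 1 ∧ r = ‖innerA A (T x) x‖}

/-- The `A`-operator seminorm `‖T‖_A = sup { ‖Tx‖_A : ‖x‖_A = 1 }`. -/
def opNormA (A T : H →L[ℂ] H) : ℝ :=
  sSup {r : ℝ | ∃ x : H, normA A x = 1 ∧ r = normA A (T x)}

/-- The `A`-Euclidean operator radius of the pair `(B, C)`. -/
def wAe (A B C : H →L[ℂ] H) : ℝ :=
  sSup {r : ℝ | ∃ x : H, normA A x = 1 ∧
    r = Real.sqrt ((‖innerA A (B x) x‖)^2 + (‖innerA A (C x) x‖)^2)}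

/-- The `A`-Euclidean operator seminorm of the pair `(B, C)`. -/
def normAe (A B C : H →L[ℂ] H) : ℝ :=
  sSup {r : ℝ | ∃ x : H, normA A x = 1 ∧
    r = Real.sqrt ((normA A (B x))^2 + (normA A (C x))^2)}

/-- `Re_A(T) = (T + T♯)/2`, where `Ts` is an `A`-adjoint of `T`. -/
def ReA (T Ts : H →L[ℂ] H) : H →L[ℂ] H := (2 : ℂ)⁻¹ • (T + Ts)

/-- `Im_A(T) = (T - T♯)/(2i)`, where `Ts` is an `A`-adjoint of `T`. -/
def ImA (T Ts : H →L[ℂ] H) : H →L[ℂ] H := (2 * Complex.I)⁻¹ • (T - Ts)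

/-- The pre-inner-product core induced by a positive operator `A`. -/
def coreA (A : H →L[ℂ] H) (hA : A.IsPositive) : PreInnerProductSpace.Core ℂ H where
  inner x y := ⟪x, A y⟫
  conj_inner_symm x y := by
    have hsa := hA.isSelfAdjoint
    rw [ContinuousLinearMap.isSelfAdjoint_iff_isSymmetric] at hsa
    show (starRingEnd ℂ) ⟪y, A x⟫ = ⟪x, A y⟫
    rw [inner_conj_symm]
    exact hsa x y
  re_inner_nonneg x := (RCLike.nonneg_iff.mp (hA.inner_nonneg_right x)).1
  add_left x y z := by simp [inner_add_left]
  smul_left x y r := by simp [inner_smul_left]; ring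

/-- Cauchy–Schwarz for the `A`-semi-inner product. -/
lemma abs_innerA_le (A : H →L[ℂ] H) (hA : A.IsPositive) (x y : H) :
    ‖innerA A x y‖ ≤ normA A x * normA A y := by
  have key : ‖innerA A x y‖ * ‖innerA A y x‖
      ≤ (innerA A y y).re * (innerA A x x).re :=
    @InnerProductSpace.Core.inner_mul_inner_self_le ℂ H _ _ _ (coreA A hA) y x
  have hconj : innerA A y x = (starRingEnd ℂ) (innerA A x y) := ((coreA A hA).conj_inner_symm x y).symm
  rw [hconj, Complex.norm_conj] at key
  have hx0 : 0 ≤ (innerA A x x).re := (coreA A hA).re_inner_nonneg x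
  have hy0 : 0 ≤ (innerA A y y).re := (coreA A hA).re_inner_nonneg y
  have hsq : ‖innerA A x y‖ ^ 2 ≤ (innerA A x x).re * (innerA A y y).re := by
    rw [sq]; linarith
  have := Real.sqrt_le_sqrt hsq
  rwa [Real.sqrt_sq (norm_nonneg _), Real.sqrt_mul hx0, ← normA, ← normA] at this

lemma normA_smul (A : H →L[ℂ] H) (c : ℂ) (x : H) :
    normA A (c • x) = ‖c‖ * normA A x := by
  unfold normA innerA
  rw [map_smul, inner_smul_left, inner_smul_right, ← mul_assoc,
    mul_comm ((starRingEnd ℂ) c) c, Complex.mul_conj, Complex.re_ofReal_mul,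
    Complex.normSq_eq_norm_sq, Real.sqrt_mul (by positivity), Real.sqrt_sq (norm_nonneg _)]

lemma exists_unit_normA (A : H →L[ℂ] H) (hA : A.IsPositive) (hA0 : A ≠ 0) :
    ∃ x : H, normA A x = 1 := by
  have : ∃ x : H, ⟪A x, x⟫ ≠ 0 := by
    by_contra h
    push_neg at h
    have : (A : H →ₗ[ℂ] H) = 0 := (inner_map_self_eq_zero _).mp (fun x => h x)
    exact hA0 (by ext x; exact congrFun (congrArg DFunLike.coe this) x)
  obtain ⟨x, hx⟩ := this
  have him : (⟪x, A x⟫ : ℂ).im = 0 := by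
    have h2 : (starRingEnd ℂ) (⟪x, A x⟫ : ℂ) = ⟪x, A x⟫ := (coreA A hA).conj_inner_symm x x
    have h3 := congrArg Complex.im h2
    rw [Complex.conj_im] at h3
    linarith
  have hnn : 0 ≤ (⟪x, A x⟫ : ℂ).re := (RCLike.nonneg_iff.mp (hA.inner_nonneg_right x)).1
  have hre : 0 < (innerA A x x).re := by
    rcases hnn.lt_or_eq with h | h
    · exact h
    · exfalso
      apply hx
      have hz : (⟪x, A x⟫ : ℂ) = 0 := Complex.ext h.symm him
      rw [← inner_conj_symm, hz, map_zero]
  refine ⟨((normA A x : ℂ)⁻¹) • x, ?_⟩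
  rw [normA_smul]
  have hpos : 0 < normA A x := Real.sqrt_pos.mpr hre
  rw [norm_inv, Complex.norm_real, Real.norm_eq_abs, abs_of_pos hpos, inv_mul_cancel₀ hpos.ne']

lemma wAe_mem_le (A B C : H →L[ℂ] H)
    (hBC : ∃ lam : ℝ, 0 < lam ∧ ∀ x : H,
      normA A (B x) ≤ lam * normA A x ∧ normA A (C x) ≤ lam * normA A x)
    (hA : A.IsPositive) :
    BddAbove {r : ℝ | ∃ x : H, normA A x = 1 ∧
      r = Real.sqrt ((‖innerA A (B x) x‖)^2 + (‖innerA A (C x) x‖)^2)} := by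
  obtain ⟨lam, hlam, hbd⟩ := hBC
  refine ⟨Real.sqrt (lam ^ 2 + lam ^ 2), ?_⟩
  rintro r ⟨x, hx, rfl⟩
  have hB : ‖innerA A (B x) x‖ ≤ lam := by
    calc ‖innerA A (B x) x‖ ≤ normA A (B x) * normA A x := abs_innerA_le A hA _ _
      _ = normA A (B x) := by rw [hx, mul_one]
      _ ≤ lam * normA A x := (hbd x).1
      _ = lam := by rw [hx, mul_one]
  have hC : ‖innerA A (C x) x‖ ≤ lam := by
    calc ‖innerA A (C x) x‖ ≤ normA A (C x) * normA A x := abs_innerA_le A hA _ _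
      _ = normA A (C x) := by rw [hx, mul_one]
      _ ≤ lam * normA A x := (hbd x).2
      _ = lam := by rw [hx, mul_one]
  apply Real.sqrt_le_sqrt
  have h1 : (0:ℝ) ≤ ‖innerA A (B x) x‖ := norm_nonneg _
  have h2 : (0:ℝ) ≤ ‖innerA A (C x) x‖ := norm_nonneg _
  nlinarith

/-- Key general lemma: if `|s|² + |t|² ≤ 1` then `w_A(sB + tC) ≤ w_{A,e}(B,C)`. -/
lemma wA_combination_le (A : H →L[ℂ] H) (hA : A.IsPositive) (hA0 : A ≠ 0)
    (B C : H →L[ℂ] H)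
    (hBC : ∃ lam : ℝ, 0 < lam ∧ ∀ x : H,
      normA A (B x) ≤ lam * normA A x ∧ normA A (C x) ≤ lam * normA A x)
    (s t : ℂ) (hst : ‖s‖ ^ 2 + ‖t‖ ^ 2 ≤ 1) :
    wA A (s • B + t • C) ≤ wAe A B C := by
  have hbdd := wAe_mem_le A B C hBC hA
  have hwAe0 : 0 ≤ wAe A B C := by
    obtain ⟨x, hx⟩ := exists_unit_normA A hA hA0
    have hmem : Real.sqrt ((‖innerA A (B x) x‖)^2 + (‖innerA A (C x) x‖)^2)
        ∈ {r : ℝ | ∃ x : H, normA A x = 1 ∧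
          r = Real.sqrt ((‖innerA A (B x) x‖)^2 + (‖innerA A (C x) x‖)^2)} :=
      ⟨x, hx, rfl⟩
    exact le_trans (Real.sqrt_nonneg _) (le_csSup hbdd hmem)
  apply Real.sSup_le _ hwAe0
  rintro r ⟨x, hx, rfl⟩
  set b := ‖innerA A (B x) x‖ with hb
  set c := ‖innerA A (C x) x‖ with hc
  have hlin : innerA A ((s • B + t • C) x) x
      = s * innerA A (B x) x + t * innerA A (C x) x := by
    unfold innerA
    simp [inner_add_right, inner_smul_right]
  have hstep : ‖innerA A ((s • B + t • C) x) x‖ ≤ Real.sqrt (b ^ 2 + c ^ 2) := by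
    rw [hlin]
    calc ‖s * innerA A (B x) x + t * innerA A (C x) x‖
        ≤ ‖s‖ * b + ‖t‖ * c := by
          refine le_trans (norm_add_le _ _) ?_
          simp [norm_mul, hb, hc]
      _ ≤ Real.sqrt (b ^ 2 + c ^ 2) := by
          have hsq : (‖s‖ * b + ‖t‖ * c) ^ 2 ≤ b ^ 2 + c ^ 2 := by
            have h0 : (0:ℝ) ≤ (‖s‖ * c - ‖t‖ * b) ^ 2 := sq_nonneg _
            have hb0 : (0:ℝ) ≤ b := norm_nonneg _
            have hc0 : (0:ℝ) ≤ c := norm_nonneg _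
            nlinarith [sq_nonneg (‖s‖), sq_nonneg (‖t‖)]
          have := Real.sqrt_le_sqrt hsq
          rwa [Real.sqrt_sq (by positivity)] at this
  refine le_trans hstep (le_csSup hbdd ⟨x, hx, rfl⟩)

theorem stmt17 (A : H →L[ℂ] H) (hA : A.IsPositive) (hA0 : A ≠ 0)
    (B C : H →L[ℂ] H)
    (hBC : ∃ lam : ℝ, 0 < lam ∧ ∀ x : H,
      normA A (B x) ≤ lam * normA A x ∧ normA A (C x) ≤ lam * normA A x)
    (α : ℝ) (hα : α ∈ Set.Icc (0 : ℝ) 1) :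
    wA A (((Real.sqrt α : ℂ)) • B + ((Real.sqrt (1 - α) : ℂ)) • C) ≤ wAe A B C
      ∧ wA A (((Real.sqrt α : ℂ)) • B - ((Real.sqrt (1 - α) : ℂ)) • C) ≤ wAe A B C := by
  obtain ⟨hα0, hα1⟩ := hα
  have hs : ‖(Real.sqrt α : ℂ)‖ ^ 2 = α := by
    rw [Complex.norm_real, Real.norm_eq_abs, abs_of_nonneg (Real.sqrt_nonneg _), Real.sq_sqrt hα0]
  have ht : ‖(Real.sqrt (1 - α) : ℂ)‖ ^ 2 = 1 - α := by
    rw [Complex.norm_real, Real.norm_eq_abs, abs_of_nonneg (Real.sqrt_nonneg _), Real.sq_sqrt (by linarith)]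
  have hst : ‖(Real.sqrt α : ℂ)‖ ^ 2
      + ‖(Real.sqrt (1 - α) : ℂ)‖ ^ 2 ≤ 1 := by rw [hs, ht]; linarith
  constructor
  · exact wA_combination_le A hA hA0 B C hBC _ _ hst
  · have hsub : ((Real.sqrt α : ℂ)) • B - ((Real.sqrt (1 - α) : ℂ)) • C
        = ((Real.sqrt α : ℂ)) • B + (-(Real.sqrt (1 - α) : ℂ)) • C := by
      rw [sub_eq_add_neg, neg_smul]
    rw [hsub]
    refine wA_combination_le A hA hA0 B C hBC _ _ ?_
    rwa [norm_neg]
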